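/- Let I = (G, A, B, u_A, u_B, k) be an instance of bounded-degree cut and let X1, X2 ⊆ V be fixed subsets. Then there exists a family 𝒬 of at most 2^{6k} pairs (Y1, Y2) of subsets of V with Y1 ⊆ N(X2) and Y2 ⊆ N(X1) such that for every feasible (A,B)-cut (V1, V2) of I satisfying Z_A ∩ V1 = X1 and Z_B ∩ V2 = X2, the pair (N(X2) ∩ V1, N(X1) ∩ V2) belongs to 𝒬. -/

import Mathlib

open Finset

variable {V : Type*} [Fintype V] [DecidableEq V]

/-- Cut-size of the cut `(V1, V ∖ V1)`. -/
def cutSize (w : V → V → ℕ) (V1 : Finset V) : ℕ :=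
  ∑ u ∈ V1, ∑ v ∈ V1ᶜ, w u v

/-- Boundary `δ(X)`: unordered pairs `{u,v}` with `u ∈ X`, `v ∉ X`, `w u v > 0`. -/
def bdry (w : V → V → ℕ) (X : Finset V) : Set (Sym2 V) :=
  {e | ∃ u v, e = s(u, v) ∧ u ∈ X ∧ v ∉ X ∧ 0 < w u v}

/-- `(A,B)`-cut, represented by its first part `V1` (the second part is `V1ᶜ`). -/
def IsCut (A B V1 : Finset V) : Prop := A ⊆ V1 ∧ B ⊆ V1ᶜ

/-- Minimal `(A,B)`-cut. -/
def IsMinimalCut (w : V → V → ℕ) (A B V1 : Finset V) : Prop :=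
  IsCut A B V1 ∧
  (¬ ∃ V1' : Finset V, A ⊆ V1' ∧ V1' ⊂ V1 ∧ bdry w V1' ⊆ bdry w V1) ∧
  (¬ ∃ V2' : Finset V, B ⊆ V2' ∧ V2' ⊂ V1ᶜ ∧ bdry w V2' ⊆ bdry w V1)

/-- Minimum `(A,B)`-cut. -/
def IsMinCut (w : V → V → ℕ) (A B V1 : Finset V) : Prop :=
  IsCut A B V1 ∧ ∀ U : Finset V, IsCut A B U → cutSize w V1 ≤ cutSize w U

/-- MM `(A,B)`-cut: minimum cut with `|V1|` maximum among minimum cuts. -/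
def IsMMCut (w : V → V → ℕ) (A B V1 : Finset V) : Prop :=
  IsMinCut w A B V1 ∧ ∀ U : Finset V, IsMinCut w A B U → U.card ≤ V1.card

/-- Important `(A,B)`-cut. -/
def IsImportantCut (w : V → V → ℕ) (A B V1 : Finset V) : Prop :=
  IsMinimalCut w A B V1 ∧
  ¬ ∃ X' : Finset V, IsCut A B X' ∧ V1 ⊂ X' ∧ cutSize w X' ≤ cutSize w V1

/-- Degree of a vertex. -/
def deg (w : V → V → ℕ) (v : V) : ℕ := ∑ u, w v u

/-- `deg(v; X)`: degree of `v` towards `X ∖ {v}`. -/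
def degIn (w : V → V → ℕ) (v : V) (X : Finset V) : ℕ :=
  ∑ u ∈ X.erase v, w v u

/-- Neighborhood `N(X)`. -/
def nbhd (w : V → V → ℕ) (X : Finset V) : Finset V :=
  Finset.univ.filter (fun u => u ∉ X ∧ ∃ x ∈ X, 0 < w u x)

/-- Feasible `(A,B)`-cut for the bounded-degree cut instance `(G,A,B,uA,uB,k)`. -/
def FeasibleCut (w : V → V → ℕ) (uA uB : V → ℕ) (k : ℕ) (A B VA : Finset V) : Prop :=
  IsMinimalCut w A B VA ∧ cutSize w VA ≤ k ∧
  (∀ v ∈ VA, degIn w v VA ≤ uA v) ∧ (∀ v ∈ VAᶜ, degIn w v VAᶜ ≤ uB v)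

/-- Feasibility of the instance `(G,A,B,uA,uB,k)`. -/
def Feasible (w : V → V → ℕ) (uA uB : V → ℕ) (k : ℕ) (A B : Finset V) : Prop :=
  ∃ VA : Finset V, FeasibleCut w uA uB k A B VA

/-- Unsatisfied vertices w.r.t. an upper-bound function `u` : `{v : deg(v) > u v}`. -/
def unsat (w : V → V → ℕ) (u : V → ℕ) : Finset V :=
  Finset.univ.filter (fun v => u v < deg w v)

/-- Easy instance. -/
def EasyInstance (w : V → V → ℕ) (uA uB : V → ℕ) (A B : Finset V) : Prop :=
  unsat w uA ∪ unsat w uB ⊆ A ∪ B ∧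
  nbhd w (unsat w uA ∩ A) ⊆ A ∪ B ∧
  nbhd w (unsat w uB ∩ B) ⊆ A ∪ B

/-- `A_π` for the cut `π = (V1, V1ᶜ)`. -/
def Api (w : V → V → ℕ) (uA uB : V → ℕ) (A V1 : Finset V) : Finset V :=
  A ∪ (unsat w uA ∩ V1) ∪ (unsat w uB ∩ V1) ∪
    (nbhd w (unsat w uA ∩ V1) ∩ V1) ∪ (nbhd w (unsat w uB ∩ V1ᶜ) ∩ V1)

/-- `B_π` for the cut `π = (V1, V1ᶜ)`. -/
def Bpi (w : V → V → ℕ) (uA uB : V → ℕ) (B V1 : Finset V) : Finset V :=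
  B ∪ (unsat w uA ∩ V1ᶜ) ∪ (unsat w uB ∩ V1ᶜ) ∪
    (nbhd w (unsat w uA ∩ V1) ∩ V1ᶜ) ∪ (nbhd w (unsat w uB ∩ V1ᶜ) ∩ V1ᶜ)

set_option linter.unusedSectionVars false
set_option linter.unusedVariables false
attribute [local instance] Classical.propDecidable

lemma cutSize_eq (w : V → V → ℕ) (W : Finset V) :
    cutSize w W = ∑ u : V, ∑ v : V, if u ∈ W ∧ v ∉ W then w u v else 0 := by
  unfold cutSize
  have h1 : ∀ u, ∑ v ∈ Wᶜ, w u v = ∑ v : V, if v ∉ W then w u v else 0 := by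
    intro u
    rw [← Finset.sum_filter]
    congr 1
    ext v
    simp
  calc ∑ u ∈ W, ∑ v ∈ Wᶜ, w u v
      = ∑ u : V, if u ∈ W then ∑ v ∈ Wᶜ, w u v else 0 := by
        rw [← Finset.sum_filter]; congr 1; ext u; simp
    _ = ∑ u : V, ∑ v : V, if u ∈ W ∧ v ∉ W then w u v else 0 := by
        refine Finset.sum_congr rfl fun u _ => ?_
        by_cases hu : u ∈ W
        · rw [if_pos hu, h1 u]
          refine Finset.sum_congr rfl fun v _ => by simp [hu]
        · rw [if_neg hu]
          symm
          refine Finset.sum_eq_zero fun v _ => by simp [hu]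

lemma submod (w : V → V → ℕ) (X Y : Finset V) :
    cutSize w (X ∪ Y) + cutSize w (X ∩ Y) ≤ cutSize w X + cutSize w Y := by
  simp only [cutSize_eq]
  rw [← Finset.sum_add_distrib, ← Finset.sum_add_distrib]
  refine Finset.sum_le_sum fun u _ => ?_
  rw [← Finset.sum_add_distrib, ← Finset.sum_add_distrib]
  refine Finset.sum_le_sum fun v _ => ?_
  by_cases hux : u ∈ X <;> by_cases huy : u ∈ Y <;> by_cases hvx : v ∈ X <;>
    by_cases hvy : v ∈ Y <;>
    simp [Finset.mem_union, Finset.mem_inter, hux, huy, hvx, hvy]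

lemma cutSize_compl (w : V → V → ℕ) (hsymm : ∀ u v, w u v = w v u) (W : Finset V) :
    cutSize w Wᶜ = cutSize w W := by
  simp only [cutSize_eq, compl_compl]
  rw [Finset.sum_comm]
  refine Finset.sum_congr rfl fun u _ => Finset.sum_congr rfl fun v _ => ?_
  by_cases h1 : u ∈ W <;> by_cases h2 : v ∈ W <;> simp [h1, h2, hsymm u v]

lemma crossing_card (w : V → V → ℕ) (W : Finset V) :
    ((W.filter (fun v => ∃ x ∈ Wᶜ, 0 < w v x)).card) ≤ cutSize w W := by
  unfold cutSize
  calc (W.filter (fun v => ∃ x ∈ Wᶜ, 0 < w v x)).card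
      = ∑ u ∈ W.filter (fun v => ∃ x ∈ Wᶜ, 0 < w v x), 1 := by simp
    _ ≤ ∑ u ∈ W.filter (fun v => ∃ x ∈ Wᶜ, 0 < w v x), ∑ v ∈ Wᶜ, w u v := by
        refine Finset.sum_le_sum fun u hu => ?_
        obtain ⟨x, hx, hwx⟩ := (Finset.mem_filter.mp hu).2
        calc 1 ≤ w u x := hwx
          _ ≤ ∑ v ∈ Wᶜ, w u v := Finset.single_le_sum (fun _ _ => Nat.zero_le _) hx
    _ ≤ ∑ u ∈ W, ∑ v ∈ Wᶜ, w u v :=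
        Finset.sum_le_sum_of_subset (Finset.filter_subset _ _)
attribute [local instance] Classical.propDecidable
set_option linter.unusedSectionVars false
set_option linter.unusedVariables false

def step (w : V → V → ℕ) (W : Finset V) (a b : V) : Prop :=
  a ∈ W ∧ b ∈ W ∧ 0 < w a b

def Reach (w : V → V → ℕ) (W : Finset V) (s x : V) : Prop :=
  Relation.ReflTransGen (step w W) s x

def Conn (w : V → V → ℕ) (S W : Finset V) : Prop :=
  ∀ x ∈ W, ∃ s ∈ S, Reach w W s x

lemma Reach.mono {w w' : V → V → ℕ} {W W' : Finset V}
    (hW : W ⊆ W') (hw : ∀ a b, 0 < w a b → 0 < w' a b) {s x : V}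
    (h : Reach w W s x) : Reach w' W' s x :=
  Relation.ReflTransGen.mono (fun a b hab => ⟨hW hab.1, hW hab.2.1, hw _ _ hab.2.2⟩) _ _ h

lemma reach_closed {w : V → V → ℕ} {W P : Finset V}
    (hP : ∀ a ∈ P, ∀ b, 0 < w a b → b ∈ P) {s x : V}
    (h : Reach w W s x) (hs : s ∈ P) : x ∈ P := by
  induction h with
  | refl => exact hs
  | tail h₁ h₂ ih => exact hP _ ih _ h₂.2.2

noncomputable def SReach (w : V → V → ℕ) (S W : Finset V) : Finset V :=
  W.filter (fun x => ∃ s ∈ S, Reach w W s x)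

lemma SReach_subset (w : V → V → ℕ) (S W : Finset V) : SReach w S W ⊆ W :=
  Finset.filter_subset _ _

lemma subset_SReach {S W : Finset V} (w : V → V → ℕ) (hS : S ⊆ W) : S ⊆ SReach w S W := by
  intro s hs
  exact Finset.mem_filter.mpr ⟨hS hs, s, hs, Relation.ReflTransGen.refl⟩

lemma reach_SReach {w : V → V → ℕ} {S W : Finset V} {s x : V} (hs : s ∈ S)
    (h : Reach w W s x) : Reach w (SReach w S W) s x := by
  induction h with
  | refl => exact Relation.ReflTransGen.refl
  | @tail b c h₁ h₂ ih =>
      refine ih.tail ⟨?_, ?_, h₂.2.2⟩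
      · exact Finset.mem_filter.mpr ⟨h₂.1, s, hs, h₁⟩
      · exact Finset.mem_filter.mpr ⟨h₂.2.1, s, hs, h₁.tail h₂⟩

lemma conn_SReach (w : V → V → ℕ) (S W : Finset V) : Conn w S (SReach w S W) := by
  intro x hx
  obtain ⟨hxW, s, hs, hr⟩ := Finset.mem_filter.mp hx
  exact ⟨s, hs, reach_SReach hs hr⟩

lemma SReach_edge {w : V → V → ℕ} {S W : Finset V} {a b : V}
    (ha : a ∈ SReach w S W) (hb : b ∈ W) (hw : 0 < w a b) : b ∈ SReach w S W := by
  obtain ⟨haW, s, hs, hr⟩ := Finset.mem_filter.mp ha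
  exact Finset.mem_filter.mpr ⟨hb, s, hs, hr.tail ⟨haW, hb, hw⟩⟩

lemma conn_union {w : V → V → ℕ} {S W1 W2 : Finset V}
    (h1 : Conn w S W1) (h2 : Conn w S W2) : Conn w S (W1 ∪ W2) := by
  intro x hx
  rcases Finset.mem_union.mp hx with hx | hx
  · obtain ⟨s, hs, hr⟩ := h1 x hx
    exact ⟨s, hs, hr.mono Finset.subset_union_left (fun _ _ h => h)⟩
  · obtain ⟨s, hs, hr⟩ := h2 x hx
    exact ⟨s, hs, hr.mono Finset.subset_union_right (fun _ _ h => h)⟩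

def cuts (S T : Finset V) : Finset (Finset V) :=
  Finset.univ.powerset.filter (fun W => S ⊆ W ∧ T ⊆ Wᶜ)

noncomputable def lam (w : V → V → ℕ) (S T : Finset V) : ℕ :=
  if h : (cuts S T).Nonempty then ((cuts S T).image (cutSize w)).min' (h.image _) else 0

noncomputable def Imp (w : V → V → ℕ) (S T : Finset V) (k : ℕ) : Finset (Finset V) :=
  (cuts S T).filter (fun W => cutSize w W ≤ k ∧ Conn w S W ∧
    ¬∃ W' ∈ cuts S T, W ⊂ W' ∧ Conn w S W' ∧ cutSize w W' ≤ cutSize w W)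

lemma mem_cuts {S T W : Finset V} : W ∈ cuts S T ↔ S ⊆ W ∧ T ⊆ Wᶜ := by
  simp [cuts]

lemma subset_compl_iff {T W : Finset V} : T ⊆ Wᶜ ↔ ∀ x ∈ T, x ∉ W := by
  constructor
  · intro h x hx
    exact Finset.mem_compl.mp (h hx)
  · intro h x hx
    exact Finset.mem_compl.mpr (h x hx)

lemma cuts_union {S T U U' : Finset V} (h : U ∈ cuts S T) (h' : U' ∈ cuts S T) :
    U ∪ U' ∈ cuts S T := by
  rw [mem_cuts] at *
  refine ⟨h.1.trans Finset.subset_union_left, subset_compl_iff.mpr fun x hx hm => ?_⟩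
  rcases Finset.mem_union.mp hm with hm | hm
  · exact subset_compl_iff.mp h.2 x hx hm
  · exact subset_compl_iff.mp h'.2 x hx hm

lemma cuts_inter {S T U U' : Finset V} (h : U ∈ cuts S T) (h' : U' ∈ cuts S T) :
    U ∩ U' ∈ cuts S T := by
  rw [mem_cuts] at *
  exact ⟨Finset.subset_inter h.1 h'.1,
    subset_compl_iff.mpr fun x hx hm => subset_compl_iff.mp h.2 x hx (Finset.mem_inter.mp hm).1⟩

lemma lam_le {w : V → V → ℕ} {S T U : Finset V} (h : U ∈ cuts S T) :
    lam w S T ≤ cutSize w U := by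
  rw [lam, dif_pos ⟨U, h⟩]
  exact Finset.min'_le _ _ (Finset.mem_image_of_mem _ h)

lemma exists_mincut {w : V → V → ℕ} {S T : Finset V} (h : (cuts S T).Nonempty) :
    ∃ U ∈ cuts S T, cutSize w U = lam w S T := by
  rw [lam, dif_pos h]
  obtain ⟨U, hU, hval⟩ := Finset.mem_image.mp (Finset.min'_mem ((cuts S T).image (cutSize w)) (h.image _))
  exact ⟨U, hU, hval⟩

lemma exists_maxcard_mincut {w : V → V → ℕ} {S T : Finset V} (h : (cuts S T).Nonempty) :
    ∃ U ∈ cuts S T, cutSize w U = lam w S T ∧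
      ∀ U' ∈ cuts S T, cutSize w U' = lam w S T → U'.card ≤ U.card := by
  classical
  have hne : ((cuts S T).filter (fun U => cutSize w U = lam w S T)).Nonempty := by
    obtain ⟨U, hU, hval⟩ := exists_mincut (w := w) h
    exact ⟨U, Finset.mem_filter.mpr ⟨hU, hval⟩⟩
  obtain ⟨U, hU, hmax⟩ := Finset.exists_max_image _ Finset.card hne
  obtain ⟨hU1, hU2⟩ := Finset.mem_filter.mp hU
  exact ⟨U, hU1, hU2, fun U' h1 h2 => hmax U' (Finset.mem_filter.mpr ⟨h1, h2⟩)⟩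

lemma cutSize_SReach (w : V → V → ℕ) (S W : Finset V) :
    cutSize w (SReach w S W) ≤ cutSize w W := by
  have key : ∀ u ∈ SReach w S W, ∀ v ∈ W, v ∉ SReach w S W → w u v = 0 := by
    intro u hu v hv hvn
    by_contra h
    exact hvn (SReach_edge hu hv (Nat.pos_of_ne_zero h))
  simp only [cutSize_eq]
  refine Finset.sum_le_sum fun u _ => Finset.sum_le_sum fun v _ => ?_
  by_cases hu : u ∈ SReach w S W
  · by_cases hv : v ∈ SReach w S W
    · simp [hv]
    · by_cases hvW : v ∈ W
      · simp [key u hu v hvW hv]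
      · rw [if_pos ⟨hu, hv⟩, if_pos ⟨SReach_subset w S W hu, hvW⟩]
  · simp [hu]

lemma pushing (w : V → V → ℕ) (S T : Finset V) (k : ℕ) {V1 : Finset V}
    (h1 : V1 ∈ cuts S T) (hc : cutSize w V1 ≤ k) (hconn : Conn w S V1) :
    ∃ W ∈ Imp w S T k, V1 ⊆ W := by
  classical
  set F := (cuts S T).filter (fun W => cutSize w W ≤ k ∧ Conn w S W ∧ V1 ⊆ W) with hF
  have hne : F.Nonempty := ⟨V1, Finset.mem_filter.mpr ⟨h1, hc, hconn, Finset.Subset.refl _⟩⟩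
  obtain ⟨W, hW, hmax⟩ := Finset.exists_max_image F Finset.card hne
  obtain ⟨hWcuts, hWk, hWconn, hWsub⟩ := Finset.mem_filter.mp hW
  refine ⟨W, Finset.mem_filter.mpr ⟨hWcuts, hWk, hWconn, ?_⟩, hWsub⟩
  rintro ⟨W', hW'cuts, hss, hconn', hle⟩
  have hW'F : W' ∈ F := Finset.mem_filter.mpr
    ⟨hW'cuts, hle.trans hWk, hconn', hWsub.trans hss.subset⟩
  exact absurd (hmax W' hW'F) (not_le.mpr (Finset.card_lt_card hss))

def wmod (w : V → V → ℕ) (u v : V) : V → V → ℕ :=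
  fun a b => if (a = u ∧ b = v) ∨ (a = v ∧ b = u) then w a b - 1 else w a b

lemma wmod_le (w : V → V → ℕ) (u v a b : V) : wmod w u v a b ≤ w a b := by
  unfold wmod; split <;> omega

lemma wmod_pos {w : V → V → ℕ} {u v a b : V} (h : 0 < wmod w u v a b) : 0 < w a b :=
  lt_of_lt_of_le h (wmod_le w u v a b)

lemma wmod_symm {w : V → V → ℕ} (hsymm : ∀ a b, w a b = w b a) (u v : V) :
    ∀ a b, wmod w u v a b = wmod w u v b a := by
  intro a b
  unfold wmod
  rcases em ((a = u ∧ b = v) ∨ (a = v ∧ b = u)) with h | h <;>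
    rcases em ((b = u ∧ a = v) ∨ (b = v ∧ a = u)) with h' | h' <;>
    simp [h, h', hsymm a b] <;> tauto

lemma cutSize_wmod (w : V → V → ℕ) (hsymm : ∀ a b, w a b = w b a) {u v : V}
    (hw : 0 < w u v) (huv : u ≠ v) (U : Finset V) :
    cutSize w U = cutSize (wmod w u v) U +
      ((if u ∈ U ∧ v ∉ U then 1 else 0) + (if v ∈ U ∧ u ∉ U then 1 else 0)) := by
  have hvu : 0 < w v u := by rw [← hsymm]; exact hw
  simp only [cutSize_eq]
  have key : ∀ a b : V, (if a ∈ U ∧ b ∉ U then w a b else 0) =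
      (if a ∈ U ∧ b ∉ U then wmod w u v a b else 0) +
      ((if a = u ∧ b = v then (if a ∈ U ∧ b ∉ U then 1 else 0) else 0) +
       (if a = v ∧ b = u then (if a ∈ U ∧ b ∉ U then 1 else 0) else 0)) := by
    intro a b
    rcases em ((a = u ∧ b = v) ∨ (a = v ∧ b = u)) with hp | hp
    · rcases hp with ⟨ha, hb⟩ | ⟨ha, hb⟩
      · have hab : 0 < w a b := by rw [ha, hb]; exact hw
        have hno : ¬(a = v ∧ b = u) := fun h => huv (ha.symm.trans h.1)
        simp only [wmod, if_pos (Or.inl ⟨ha, hb⟩ : (a = u ∧ b = v) ∨ (a = v ∧ b = u)),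
          if_pos (⟨ha, hb⟩ : a = u ∧ b = v), if_neg hno]
        split_ifs <;> omega
      · have hab : 0 < w a b := by rw [ha, hb]; exact hvu
        have hno : ¬(a = u ∧ b = v) := fun h => huv (h.1.symm.trans ha)
        simp only [wmod, if_pos (Or.inr ⟨ha, hb⟩ : (a = u ∧ b = v) ∨ (a = v ∧ b = u)),
          if_pos (⟨ha, hb⟩ : a = v ∧ b = u), if_neg hno]
        split_ifs <;> omega
    · have h1 : ¬(a = u ∧ b = v) := fun h => hp (Or.inl h)
      have h2 : ¬(a = v ∧ b = u) := fun h => hp (Or.inr h)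
      simp only [wmod, if_neg hp, if_neg h1, if_neg h2]
      omega
  calc ∑ a : V, ∑ b : V, (if a ∈ U ∧ b ∉ U then w a b else 0)
      = (∑ a : V, ∑ b : V, (if a ∈ U ∧ b ∉ U then wmod w u v a b else 0)) +
        ((∑ a : V, ∑ b : V, (if a = u ∧ b = v then (if a ∈ U ∧ b ∉ U then 1 else 0) else 0)) +
         (∑ a : V, ∑ b : V, (if a = v ∧ b = u then (if a ∈ U ∧ b ∉ U then 1 else 0) else 0))) := by
        simp only [← Finset.sum_add_distrib]
        exact Finset.sum_congr rfl fun a _ => Finset.sum_congr rfl fun b _ => key a b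
    _ = _ := by
        congr 1
        congr 1
        · have : ∀ a : V, ∑ b : V, (if a = u ∧ b = v then (if a ∈ U ∧ b ∉ U then 1 else 0) else 0)
              = if a = u then (if a ∈ U ∧ v ∉ U then 1 else 0) else 0 := by
            intro a
            by_cases ha : a = u
            · subst ha
              simp only [true_and, if_pos rfl]
              rw [Finset.sum_ite_eq' Finset.univ v (fun b => if a ∈ U ∧ b ∉ U then 1 else 0)]
              simp
            · simp [ha]
          rw [Finset.sum_congr rfl (fun a _ => this a),
            Finset.sum_ite_eq' Finset.univ u (fun a => if a ∈ U ∧ v ∉ U then 1 else 0)]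
          simp
        · have : ∀ a : V, ∑ b : V, (if a = v ∧ b = u then (if a ∈ U ∧ b ∉ U then 1 else 0) else 0)
              = if a = v then (if a ∈ U ∧ u ∉ U then 1 else 0) else 0 := by
            intro a
            by_cases ha : a = v
            · subst ha
              simp only [true_and, if_pos rfl]
              rw [Finset.sum_ite_eq' Finset.univ u (fun b => if a ∈ U ∧ b ∉ U then 1 else 0)]
              simp
            · simp [ha]
          rw [Finset.sum_congr rfl (fun a _ => this a),
            Finset.sum_ite_eq' Finset.univ v (fun a => if a ∈ U ∧ u ∉ U then 1 else 0)]
          simp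

lemma cutSize_le_wmod (w : V → V → ℕ) (hsymm : ∀ a b, w a b = w b a) {u v : V}
    (hw : 0 < w u v) (huv : u ≠ v) (U : Finset V) :
    cutSize w U ≤ cutSize (wmod w u v) U + 1 := by
  rw [cutSize_wmod w hsymm hw huv U]
  by_cases h1 : u ∈ U <;> by_cases h2 : v ∈ U <;> simp [h1, h2]

lemma cutSize_wmod_crossing (w : V → V → ℕ) (hsymm : ∀ a b, w a b = w b a) {u v : V}
    (hw : 0 < w u v) (huv : u ≠ v) {U : Finset V} (hu : u ∈ U) (hv : v ∉ U) :
    cutSize w U = cutSize (wmod w u v) U + 1 := by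
  rw [cutSize_wmod w hsymm hw huv U]
  simp [hu, hv]

lemma conn_wmod {w : V → V → ℕ} {u v : V} {S W : Finset V} (hv : v ∉ W)
    (h : Conn w S W) : Conn (wmod w u v) S W := by
  intro x hx
  obtain ⟨s, hs, hr⟩ := h x hx
  refine ⟨s, hs, Relation.ReflTransGen.mono (fun a b hab => ?_) _ _ hr⟩
  refine ⟨hab.1, hab.2.1, ?_⟩
  have : wmod w u v a b = w a b := by
    unfold wmod
    rw [if_neg]
    rintro (⟨rfl, rfl⟩ | ⟨rfl, rfl⟩)
    · exact hv hab.2.1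
    · exact hv hab.1
  rw [this]
  exact hab.2.2

lemma conn_of_wmod {w : V → V → ℕ} {u v : V} {S W : Finset V}
    (h : Conn (wmod w u v) S W) : Conn w S W := by
  intro x hx
  obtain ⟨s, hs, hr⟩ := h x hx
  exact ⟨s, hs, hr.mono (Finset.Subset.refl _) (fun a b => wmod_pos)⟩

lemma lam_wmod (w : V → V → ℕ) (hsymm : ∀ a b, w a b = w b a) {u v : V}
    (hw : 0 < w u v) (huv : u ≠ v) {S T : Finset V} (hne : (cuts S T).Nonempty) :
    lam w S T ≤ lam (wmod w u v) S T + 1 := by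
  obtain ⟨U, hU, hval⟩ := exists_mincut (w := wmod w u v) hne
  calc lam w S T ≤ cutSize w U := lam_le hU
    _ ≤ cutSize (wmod w u v) U + 1 := cutSize_le_wmod w hsymm hw huv U
    _ = lam (wmod w u v) S T + 1 := by rw [hval]

lemma conn_extend {w : V → V → ℕ} {S W W' : Finset V} {v : V} (hv : v ∈ W)
    (hWW' : W ⊆ W') (hW : Conn w S W) (hW' : Conn w (insert v S) W') : Conn w S W' := by
  intro x hx
  obtain ⟨s', hs', hr'⟩ := hW' x hx
  rcases Finset.mem_insert.mp hs' with rfl | hs'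
  · obtain ⟨s, hs, hr⟩ := hW s' hv
    exact ⟨s, hs, (hr.mono hWW' (fun _ _ h => h)).trans hr'⟩
  · exact ⟨s', hs', hr'⟩

lemma imp_empty_of_no_cuts {w : V → V → ℕ} {S T : Finset V} (h : ¬(cuts S T).Nonempty)
    (k : ℕ) : Imp w S T k = ∅ := by
  rw [Finset.eq_empty_iff_forall_notMem]
  intro W hW
  exact h ⟨W, (Finset.mem_filter.mp hW).1⟩

lemma imp_empty_of_lt {w : V → V → ℕ} {S T : Finset V} {k : ℕ} (h : k < lam w S T) :
    Imp w S T k = ∅ := by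
  rw [Finset.eq_empty_iff_forall_notMem]
  intro W hW
  obtain ⟨hWc, hWk, -⟩ := Finset.mem_filter.mp hW
  exact absurd ((lam_le hWc).trans hWk) (not_le.mpr h)

lemma cutSize_zero_closed {w : V → V → ℕ} {U : Finset V} (h : cutSize w U = 0) :
    ∀ a ∈ U, ∀ b, 0 < w a b → b ∈ U := by
  intro a ha b hw
  by_contra hb
  have h1 : ∑ v ∈ Uᶜ, w a v = 0 := by
    have := (Finset.sum_eq_zero_iff.mp h) a ha
    exact this
  have h2 : w a b = 0 := (Finset.sum_eq_zero_iff.mp h1) b (Finset.mem_compl.mpr hb)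
  omega

lemma subset_of_imp {w : V → V → ℕ} {S T Vs : Finset V} {k : ℕ}
    (hVs : Vs ∈ cuts S T) (hlam : cutSize w Vs = lam w S T) (hconn : Conn w S Vs)
    {W : Finset V} (hW : W ∈ Imp w S T k) : Vs ⊆ W := by
  obtain ⟨hWc, hWk, hWconn, hWimp⟩ := Finset.mem_filter.mp hW
  by_contra hsub
  have hcut : W ∪ Vs ∈ cuts S T := cuts_union hWc hVs
  have hconn' : Conn w S (W ∪ Vs) := conn_union hWconn hconn
  have hinter : lam w S T ≤ cutSize w (W ∩ Vs) := lam_le (cuts_inter hWc hVs)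
  have hsm := submod w W Vs
  have hle : cutSize w (W ∪ Vs) ≤ cutSize w W := by omega
  obtain ⟨x, hxVs, hxW⟩ := Finset.not_subset.mp hsub
  have hss : W ⊂ W ∪ Vs :=
    Finset.ssubset_iff_of_subset Finset.subset_union_left |>.mpr
      ⟨x, Finset.mem_union_right _ hxVs, hxW⟩
  exact hWimp ⟨W ∪ Vs, hcut, hss, hconn', hle⟩

lemma imp_subset_singleton {w : V → V → ℕ} {S T Vs : Finset V} {k : ℕ}
    (h0 : lam w S T = 0) (hVs : Vs ∈ cuts S T) (hlam : cutSize w Vs = lam w S T)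
    (hconn : Conn w S Vs) : Imp w S T k ⊆ {Vs} := by
  intro W hW
  have h1 : Vs ⊆ W := subset_of_imp hVs hlam hconn hW
  have hz : cutSize w Vs = 0 := by rw [hlam, h0]
  obtain ⟨hWc, hWk, hWconn, -⟩ := Finset.mem_filter.mp hW
  have h2 : W ⊆ Vs := by
    intro x hx
    obtain ⟨s, hs, hr⟩ := hWconn x hx
    exact reach_closed (cutSize_zero_closed hz) hr ((mem_cuts.mp hVs).1 hs)
  rw [Finset.mem_singleton]
  exact Finset.Subset.antisymm h2 h1

lemma branch_a {w : V → V → ℕ} {S T : Finset V} {k : ℕ} (v : V) :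
    (Imp w S T k).filter (fun W => v ∈ W) ⊆ Imp w (insert v S) T k := by
  intro W hW
  obtain ⟨hWi, hvW⟩ := Finset.mem_filter.mp hW
  obtain ⟨hWc, hWk, hWconn, hWimp⟩ := Finset.mem_filter.mp hWi
  obtain ⟨hSW, hTW⟩ := mem_cuts.mp hWc
  refine Finset.mem_filter.mpr ⟨mem_cuts.mpr ⟨Finset.insert_subset hvW hSW, hTW⟩, hWk, ?_, ?_⟩
  · intro x hx
    obtain ⟨s, hs, hr⟩ := hWconn x hx
    exact ⟨s, Finset.mem_insert_of_mem hs, hr⟩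
  · rintro ⟨W', hc', hss, hconn', hle⟩
    obtain ⟨hSW', hTW'⟩ := mem_cuts.mp hc'
    refine hWimp ⟨W', mem_cuts.mpr ⟨(Finset.subset_insert v S).trans hSW', hTW'⟩, hss,
      conn_extend hvW hss.subset hWconn hconn', hle⟩

lemma branch_b {w : V → V → ℕ} {S T : Finset V} {k : ℕ} {u v : V}
    (hsymm : ∀ a b, w a b = w b a) (hw : 0 < w u v) (huv : u ≠ v) :
    (Imp w S T k).filter (fun W => u ∈ W ∧ v ∉ W) ⊆ Imp (wmod w u v) S T (k - 1) := by
  intro W hW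
  obtain ⟨hWi, huW, hvW⟩ := Finset.mem_filter.mp hW
  obtain ⟨hWc, hWk, hWconn, hWimp⟩ := Finset.mem_filter.mp hWi
  have hcross : cutSize w W = cutSize (wmod w u v) W + 1 :=
    cutSize_wmod_crossing w hsymm hw huv huW hvW
  refine Finset.mem_filter.mpr ⟨hWc, by omega, conn_wmod hvW hWconn, ?_⟩
  rintro ⟨W', hc', hss, hconn', hle⟩
  refine hWimp ⟨W', hc', hss, conn_of_wmod hconn', ?_⟩
  have h1 : cutSize w W' ≤ cutSize (wmod w u v) W' + 1 := cutSize_le_wmod w hsymm hw huv W'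
  omega

lemma lam_insert_gt {w : V → V → ℕ} {S T Vo : Finset V} {v : V}
    (hVo : Vo ∈ cuts S T) (hVolam : cutSize w Vo = lam w S T)
    (hmax : ∀ U' ∈ cuts S T, cutSize w U' = lam w S T → U'.card ≤ Vo.card)
    (hv : v ∉ Vo) (hne' : (cuts (insert v S) T).Nonempty) :
    lam w S T + 1 ≤ lam w (insert v S) T := by
  by_contra h
  push_neg at h
  have hle : lam w (insert v S) T ≤ lam w S T := by omega
  obtain ⟨U', hU', hU'val⟩ := exists_mincut (w := w) hne'
  obtain ⟨hSU', hTU'⟩ := mem_cuts.mp hU'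
  have hU'c : U' ∈ cuts S T :=
    mem_cuts.mpr ⟨(Finset.subset_insert v S).trans hSU', hTU'⟩
  have h1 : lam w S T ≤ cutSize w (U' ∪ Vo) := lam_le (cuts_union hU'c hVo)
  have h2 : lam w S T ≤ cutSize w (U' ∩ Vo) := lam_le (cuts_inter hU'c hVo)
  have hsm := submod w U' Vo
  have hcard : (U' ∪ Vo).card ≤ Vo.card :=
    hmax _ (cuts_union hU'c hVo) (by omega)
  have hEq : U' ∪ Vo = Vo :=
    (Finset.eq_of_subset_of_card_le Finset.subset_union_right hcard).symm
  have hsubU : U' ⊆ Vo := by rw [← hEq]; exact Finset.subset_union_left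
  exact hv (hsubU (hSU' (Finset.mem_insert_self v S)))

theorem imp_card_le : ∀ (μ : ℕ) (w : V → V → ℕ), (∀ a b, w a b = w b a) →
    ∀ (S T : Finset V) (k : ℕ), 2 * k ≤ μ + lam w S T → (Imp w S T k).card ≤ 2 ^ μ := by
  intro μ
  induction μ with
  | zero =>
    intro w hsymm S T k hμ
    by_cases hne : (cuts S T).Nonempty
    · by_cases hk : k < lam w S T
      · simp [imp_empty_of_lt hk]
      · push_neg at hk
        have h0 : lam w S T = 0 := by omega
        obtain ⟨Vo, hVo, hVolam, hmax⟩ := exists_maxcard_mincut (w := w) hne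
        set Vs := SReach w S Vo with hVsdef
        have hSVo : S ⊆ Vo := (mem_cuts.mp hVo).1
        have hVsc : Vs ∈ cuts S T := mem_cuts.mpr ⟨subset_SReach w hSVo,
          (mem_cuts.mp hVo).2.trans (Finset.compl_subset_compl.mpr (SReach_subset w S Vo))⟩
        have hVslam : cutSize w Vs = lam w S T :=
          le_antisymm ((cutSize_SReach w S Vo).trans hVolam.le) (lam_le hVsc)
        calc (Imp w S T k).card ≤ ({Vs} : Finset (Finset V)).card :=
              Finset.card_le_card (imp_subset_singleton h0 hVsc hVslam (conn_SReach w S Vo))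
          _ ≤ 2 ^ 0 := by simp
    · simp [imp_empty_of_no_cuts hne]
  | succ n ih =>
    intro w hsymm S T k hμ
    by_cases hne : (cuts S T).Nonempty
    · by_cases hk : k < lam w S T
      · simp [imp_empty_of_lt hk]
      · push_neg at hk
        obtain ⟨Vo, hVo, hVolam, hmax⟩ := exists_maxcard_mincut (w := w) hne
        set Vs := SReach w S Vo with hVsdef
        have hSVo : S ⊆ Vo := (mem_cuts.mp hVo).1
        have hVsc : Vs ∈ cuts S T := mem_cuts.mpr ⟨subset_SReach w hSVo,
          (mem_cuts.mp hVo).2.trans (Finset.compl_subset_compl.mpr (SReach_subset w S Vo))⟩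
        have hVslam : cutSize w Vs = lam w S T :=
          le_antisymm ((cutSize_SReach w S Vo).trans hVolam.le) (lam_le hVsc)
        by_cases h0 : lam w S T = 0
        · calc (Imp w S T k).card ≤ ({Vs} : Finset (Finset V)).card :=
              Finset.card_le_card (imp_subset_singleton h0 hVsc hVslam (conn_SReach w S Vo))
            _ ≤ 2 ^ (n + 1) := by simp [Nat.one_le_two_pow]
        · -- λ ≥ 1 : find a crossing edge (u,v) of Vs with v ∉ Vo
          have hpos : 0 < cutSize w Vs := by omega
          obtain ⟨u, huVs, v, hvVs, hwuv⟩ :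
              ∃ u ∈ Vs, ∃ v ∈ Vsᶜ, 0 < w u v := by
            by_contra hcon
            push_neg at hcon
            have : cutSize w Vs = 0 := Finset.sum_eq_zero fun a ha =>
              Finset.sum_eq_zero fun b hb => Nat.le_zero.mp (hcon a ha b hb)
            omega
          have hvW : v ∉ Vs := Finset.mem_compl.mp hvVs
          have hvVo : v ∉ Vo := fun hvVo => hvW (SReach_edge huVs hvVo hwuv)
          have huv : u ≠ v := fun h => hvW (h ▸ huVs)
          -- split Imp by membership of v
          rw [← Finset.card_filter_add_card_filter_not
            (s := Imp w S T k) (p := fun W => v ∈ W)]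
          have hbound1 : ((Imp w S T k).filter (fun W => v ∈ W)).card ≤ 2 ^ n := by
            by_cases hfe : ((Imp w S T k).filter (fun W => v ∈ W)).Nonempty
            · obtain ⟨W₀, hW₀⟩ := hfe
              obtain ⟨hW₀i, hvW₀⟩ := Finset.mem_filter.mp hW₀
              have hW₀c := (Finset.mem_filter.mp hW₀i).1
              obtain ⟨hSW₀, hTW₀⟩ := mem_cuts.mp hW₀c
              have hne' : (cuts (insert v S) T).Nonempty :=
                ⟨W₀, mem_cuts.mpr ⟨Finset.insert_subset hvW₀ hSW₀, hTW₀⟩⟩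
              have hgt := lam_insert_gt hVo hVolam hmax hvVo hne'
              calc ((Imp w S T k).filter (fun W => v ∈ W)).card
                  ≤ (Imp w (insert v S) T k).card := Finset.card_le_card (branch_a v)
                _ ≤ 2 ^ n := ih w hsymm (insert v S) T k (by omega)
            · rw [Finset.not_nonempty_iff_eq_empty.mp hfe]
              simp
          have hbound2 : ((Imp w S T k).filter (fun W => ¬v ∈ W)).card ≤ 2 ^ n := by
            have hsub : ((Imp w S T k).filter (fun W => ¬v ∈ W)) ⊆
                Imp (wmod w u v) S T (k - 1) := by
              intro W hW
              obtain ⟨hWi, hvnW⟩ := Finset.mem_filter.mp hW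
              have huW : u ∈ W := subset_of_imp hVsc hVslam (conn_SReach w S Vo) hWi huVs
              exact branch_b hsymm hwuv huv (Finset.mem_filter.mpr ⟨hWi, huW, hvnW⟩)
            have hlam' := lam_wmod w hsymm hwuv huv hne (S := S) (T := T)
            calc ((Imp w S T k).filter (fun W => ¬v ∈ W)).card
                ≤ (Imp (wmod w u v) S T (k - 1)).card := Finset.card_le_card hsub
              _ ≤ 2 ^ n := ih (wmod w u v) (wmod_symm hsymm u v) S T (k - 1) (by omega)
          calc ((Imp w S T k).filter (fun W => v ∈ W)).card +
                ((Imp w S T k).filter (fun W => ¬v ∈ W)).card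
              ≤ 2 ^ n + 2 ^ n := Nat.add_le_add hbound1 hbound2
            _ = 2 ^ (n + 1) := by ring
    · simp [imp_empty_of_no_cuts hne]

lemma not_mem_bdry_inside {w : V → V → ℕ} {X : Finset V} {u v : V}
    (hu : u ∈ X) (hv : v ∈ X) : s(u, v) ∉ bdry w X := by
  rintro ⟨a, b, hab, haX, hbX, -⟩
  rcases Sym2.eq_iff.mp hab with ⟨rfl, rfl⟩ | ⟨rfl, rfl⟩
  · exact hbX hv
  · exact hbX hu

lemma conn_mono_S {w : V → V → ℕ} {S S' W : Finset V} (h : S ⊆ S')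
    (hc : Conn w S W) : Conn w S' W := by
  intro x hx
  obtain ⟨s, hs, hr⟩ := hc x hx
  exact ⟨s, h hs, hr⟩

lemma conn_min1 {w : V → V → ℕ} {A B V1 : Finset V} (h : IsMinimalCut w A B V1) :
    Conn w A V1 := by
  by_contra hc
  apply h.2.1
  refine ⟨SReach w A V1, subset_SReach w h.1.1, ?_, ?_⟩
  · refine Finset.ssubset_iff_of_subset (SReach_subset w A V1) |>.mpr ?_
    unfold Conn at hc
    push_neg at hc
    obtain ⟨x, hxV1, hx⟩ := hc
    refine ⟨x, hxV1, fun hmem => ?_⟩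
    obtain ⟨-, s, hs, hr⟩ := Finset.mem_filter.mp hmem
    exact hx s hs hr
  · rintro e ⟨a, b, rfl, haR, hbR, hpos⟩
    have hbV1 : b ∉ V1 := fun hbV1 => hbR (SReach_edge haR hbV1 hpos)
    exact ⟨a, b, rfl, SReach_subset w A V1 haR, hbV1, hpos⟩

lemma conn_min2 {w : V → V → ℕ} (hsymm : ∀ a b, w a b = w b a) {A B V1 : Finset V}
    (h : IsMinimalCut w A B V1) : Conn w B V1ᶜ := by
  by_contra hc
  apply h.2.2
  have hB : B ⊆ V1ᶜ := h.1.2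
  refine ⟨SReach w B V1ᶜ, subset_SReach w hB, ?_, ?_⟩
  · refine Finset.ssubset_iff_of_subset (SReach_subset w B V1ᶜ) |>.mpr ?_
    unfold Conn at hc
    push_neg at hc
    obtain ⟨x, hxV1, hx⟩ := hc
    refine ⟨x, hxV1, fun hmem => ?_⟩
    obtain ⟨-, s, hs, hr⟩ := Finset.mem_filter.mp hmem
    exact hx s hs hr
  · rintro e ⟨a, b, rfl, haR, hbR, hpos⟩
    have hbV1 : b ∉ V1ᶜ := fun hbV1 => hbR (SReach_edge haR hbV1 hpos)
    have hbV1' : b ∈ V1 := by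
      by_contra hb
      exact hbV1 (Finset.mem_compl.mpr hb)
    have haV1 : a ∉ V1 := Finset.mem_compl.mp (SReach_subset w B V1ᶜ haR)
    exact ⟨b, a, Sym2.eq_swap, hbV1', haV1, by rw [hsymm]; exact hpos⟩

lemma nbhd_inter_card {w : V → V → ℕ} {X W : Finset V} {k : ℕ}
    (hX : X ⊆ Wᶜ) (hcut : cutSize w W ≤ k) : (nbhd w X ∩ W).card ≤ k := by
  have hsub : nbhd w X ∩ W ⊆ W.filter (fun v => ∃ x ∈ Wᶜ, 0 < w v x) := by
    intro v hv
    obtain ⟨hvN, hvW⟩ := Finset.mem_inter.mp hv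
    obtain ⟨-, hvX, x, hxX, hpos⟩ := Finset.mem_filter.mp hvN
    exact Finset.mem_filter.mpr ⟨hvW, x, hX hxX, hpos⟩
  exact ((Finset.card_le_card hsub).trans (crossing_card w W)).trans hcut

noncomputable def famP (w : V → V → ℕ) (S T X : Finset V) (k : ℕ) : Finset (Finset V) :=
  (Imp w S T k).biUnion (fun W => (nbhd w X ∩ W).powerset)

lemma famP_card (w : V → V → ℕ) (hsymm : ∀ a b, w a b = w b a)
    (S T X : Finset V) (k : ℕ) (hX : X ⊆ T) : (famP w S T X k).card ≤ 2 ^ (3 * k) := by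
  calc (famP w S T X k).card
      ≤ ∑ W ∈ Imp w S T k, (nbhd w X ∩ W).powerset.card := Finset.card_biUnion_le
    _ ≤ ∑ W ∈ Imp w S T k, 2 ^ k := by
        refine Finset.sum_le_sum fun W hW => ?_
        obtain ⟨hWc, hWk, -⟩ := Finset.mem_filter.mp hW
        rw [Finset.card_powerset]
        exact Nat.pow_le_pow_right (by norm_num)
          (nbhd_inter_card (hX.trans (mem_cuts.mp hWc).2) hWk)
    _ = (Imp w S T k).card * 2 ^ k := by rw [Finset.sum_const, smul_eq_mul]
    _ ≤ 2 ^ (2 * k) * 2 ^ k := Nat.mul_le_mul_right _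
        (imp_card_le (2 * k) w hsymm S T k (by omega))
    _ = 2 ^ (3 * k) := by rw [← pow_add]; ring_nf

lemma famP_mem {w : V → V → ℕ} {S T X V1 : Finset V} {k : ℕ}
    (hV1 : V1 ∈ cuts S T) (hc : cutSize w V1 ≤ k) (hconn : Conn w S V1) :
    nbhd w X ∩ V1 ∈ famP w S T X k := by
  obtain ⟨W, hW, hsub⟩ := pushing w S T k hV1 hc hconn
  exact Finset.mem_biUnion.mpr ⟨W, hW, Finset.mem_powerset.mpr
    (Finset.inter_subset_inter (Finset.Subset.refl _) hsub)⟩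

/-- a family of at most `2^{6k}` candidate pairs for
`(N(X2) ∩ V1, N(X1) ∩ V2)` over feasible `(A,B)`-cuts with `Z_A ∩ V1 = X1`,
`Z_B ∩ V2 = X2`. -/
theorem candidate_pairs_nbhd (w : V → V → ℕ)
    (hsymm : ∀ u v, w u v = w v u) (hloop : ∀ v, w v v = 0)
    (A B : Finset V) (uA uB : V → ℕ) (k : ℕ)
    (hA : A.Nonempty) (hB : B.Nonempty) (hAB : Disjoint A B)
    (X1 X2 : Finset V) :
    ∃ 𝒬 : Finset (Finset V × Finset V), 𝒬.card ≤ 2 ^ (6 * k) ∧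
      (∀ p ∈ 𝒬, p.1 ⊆ nbhd w X2 ∧ p.2 ⊆ nbhd w X1) ∧
      ∀ V1 : Finset V, FeasibleCut w uA uB k A B V1 →
        unsat w uA ∩ V1 = X1 → unsat w uB ∩ V1ᶜ = X2 →
        (nbhd w X2 ∩ V1, nbhd w X1 ∩ V1ᶜ) ∈ 𝒬 := by
  classical
  refine ⟨famP w (A ∪ X1) (B ∪ X2) X2 k ×ˢ famP w (B ∪ X2) (A ∪ X1) X1 k, ?_, ?_, ?_⟩
  · rw [Finset.card_product]
    calc _ ≤ 2 ^ (3 * k) * 2 ^ (3 * k) :=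
          Nat.mul_le_mul (famP_card w hsymm _ _ _ k Finset.subset_union_right)
            (famP_card w hsymm _ _ _ k Finset.subset_union_right)
      _ = 2 ^ (6 * k) := by rw [← pow_add]; ring_nf
  · intro p hp
    obtain ⟨hp1, hp2⟩ := Finset.mem_product.mp hp
    obtain ⟨W1, -, hW1⟩ := Finset.mem_biUnion.mp hp1
    obtain ⟨W2, -, hW2⟩ := Finset.mem_biUnion.mp hp2
    exact ⟨(Finset.mem_powerset.mp hW1).trans Finset.inter_subset_left,
      (Finset.mem_powerset.mp hW2).trans Finset.inter_subset_left⟩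
  · intro V1 hfeas hX1 hX2
    obtain ⟨hmin, hk, -, -⟩ := hfeas
    have hX1V1 : X1 ⊆ V1 := hX1 ▸ Finset.inter_subset_right
    have hX2V1 : X2 ⊆ V1ᶜ := hX2 ▸ Finset.inter_subset_right
    have hAV1 : A ⊆ V1 := hmin.1.1
    have hBV1 : B ⊆ V1ᶜ := hmin.1.2
    rw [Finset.mem_product]
    constructor
    · refine famP_mem (mem_cuts.mpr ⟨Finset.union_subset hAV1 hX1V1,
        Finset.union_subset hBV1 hX2V1⟩) hk ?_
      exact conn_mono_S Finset.subset_union_left (conn_min1 hmin)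
    · refine famP_mem (mem_cuts.mpr ⟨Finset.union_subset hBV1 hX2V1, ?_⟩)
        (by rw [cutSize_compl w hsymm]; exact hk) ?_
      · rw [compl_compl]
        exact Finset.union_subset hAV1 hX1V1
      · exact conn_mono_S Finset.subset_union_left (conn_min2 hsymm hmin)
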